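/- Let k ≥ 0 be an integer and let q be a real number with q > 1. If [2]·([4k+7] − [4k+5] − [4k+3]) = [4k+6] − [4k+4], then [3]·[4k+4] = [4k+8]. -/

import Mathlib

/-- Lemma 2.4 of "Constructing the extended Haagerup planar algebra":
if `[2]·([4k+7] − [4k+5] − [4k+3]) = [4k+6] − [4k+4]` then `[3]·[4k+4] = [4k+8]`,
where `[m]` is the quantum integer for a real `q > 1`. -/
theorem stmt_0 (k : ℕ) (q : ℝ) (hq : 1 < q)
    (qi : ℕ → ℝ) (hqi : ∀ m : ℕ, qi m = (q ^ (m : ℤ) - q ^ (-(m : ℤ))) / (q - q⁻¹))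
    (h : qi 2 * (qi (4 * k + 7) - qi (4 * k + 5) - qi (4 * k + 3))
        = qi (4 * k + 6) - qi (4 * k + 4)) :
    qi 3 * qi (4 * k + 4) = qi (4 * k + 8) := by
  have hq0 : q ≠ 0 := by positivity
  set r := q⁻¹ with hrdef
  have hqr : q * r = 1 := mul_inv_cancel₀ hq0
  have hrlt : r < 1 := by rw [hrdef, inv_lt_one_iff₀]; right; exact hq
  have hs : q - r ≠ 0 := by nlinarith
  have e : ∀ m : ℕ, qi m = (q ^ m - r ^ m) / (q - r) := by
    intro m
    rw [hqi m, zpow_neg, zpow_natCast, hrdef, inv_pow]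
  simp only [e] at h ⊢
  field_simp at h ⊢
  linear_combination (-1 : ℝ) * h +
    (q^7 * q^(4*k) - q^6*r * q^(4*k) + q^4*r * q^(4*k) - q^3*r^2 * q^(4*k)
      - q^2*r^3 * r^(4*k) - q*r^6 * r^(4*k) + q*r^4 * r^(4*k) + r^7 * r^(4*k)) * hqr
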